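/- At θ* = arctan 2, the fast fibre r_{ρ*}(θ) = ρ* sin θ with ρ* = 1/(2√a) and the curve φ₀(θ) = √(cos θ(sin θ - cos θ)/a) have a tangency of order exactly one: r_{ρ*}(θ*) = φ₀(θ*) = 1/√(5a), r_{ρ*}'(θ*) = φ₀'(θ*), and r_{ρ*}''(θ*) ≠ φ₀''(θ*). -/

import Mathlib

set_option maxHeartbeats 1000000

open Real Filter Topology

/-- At `θ* = arctan 2`, the fast fibre `r_{ρ*}(θ) = ρ* sin θ`, `ρ* = 1/(2√a)`, and
`φ₀(θ) = √(cos θ(sin θ - cos θ)/a)` have a tangency of order exactly one: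
values and first derivatives coincide and equal `1/√(5a)`, but the second
derivatives differ. -/
theorem fold_point_tangency (a : ℝ) (ha : 0 < a)
    (θs ρs : ℝ) (hθs : θs = arctan 2) (hρs : ρs = 1 / (2 * Real.sqrt a))
    (rf φ₀ : ℝ → ℝ) (hrf : rf = fun θ => ρs * sin θ)
    (hφ₀ : φ₀ = fun θ => Real.sqrt (cos θ * (sin θ - cos θ) / a)) :
    rf θs = φ₀ θs ∧
    φ₀ θs = 1 / Real.sqrt (5 * a) ∧
    deriv rf θs = deriv φ₀ θs ∧
    deriv (deriv rf) θs ≠ deriv (deriv φ₀) θs := by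
  subst hθs hρs hrf hφ₀
  have ha' : a ≠ 0 := ne_of_gt ha
  set s5 : ℝ := Real.sqrt 5 with hs5def
  set sa : ℝ := Real.sqrt a with hsadef
  have hs5 : (0:ℝ) < s5 := Real.sqrt_pos.2 (by norm_num)
  have hsa : (0:ℝ) < sa := Real.sqrt_pos.2 ha
  have hs5sq : s5 ^ 2 = 5 := Real.sq_sqrt (by norm_num)
  have hsasq : sa ^ 2 = a := Real.sq_sqrt ha.le
  have hs5' : s5 ≠ 0 := ne_of_gt hs5
  have hsa' : sa ≠ 0 := ne_of_gt hsa
  have hcos : cos (arctan 2) = 1 / s5 := by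
    rw [Real.cos_arctan]; norm_num [hs5def]
  have hsin : sin (arctan 2) = 2 / s5 := by
    rw [Real.sin_arctan]; norm_num [hs5def]
  set g : ℝ → ℝ := fun θ => cos θ * (sin θ - cos θ) / a with hgdef
  -- value of g at arctan 2
  have hgval : g (arctan 2) = (1 / (s5 * sa)) ^ 2 := by
    simp only [hgdef, hcos, hsin]
    field_simp
    nlinarith [hs5sq, hsasq]
  have hginv : (0:ℝ) < 1 / (s5 * sa) := by positivity
  have hsqrtg : Real.sqrt (g (arctan 2)) = 1 / (s5 * sa) := by
    rw [hgval, Real.sqrt_sq hginv.le]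
  have hgpos : 0 < g (arctan 2) := by rw [hgval]; positivity
  -- derivative of g
  have hg' : ∀ θ : ℝ, HasDerivAt g
      ((-sin θ * (sin θ - cos θ) + cos θ * (cos θ - -sin θ)) / a) θ := by
    intro θ
    exact ((Real.hasDerivAt_cos θ).mul
      ((Real.hasDerivAt_sin θ).sub (Real.hasDerivAt_cos θ))).div_const a
  -- derivative of φ₀ wherever g > 0
  have hφ' : ∀ θ : ℝ, 0 < g θ → HasDerivAt (fun θ => Real.sqrt (g θ))
      (1 / (2 * Real.sqrt (g θ)) *
        ((-sin θ * (sin θ - cos θ) + cos θ * (cos θ - -sin θ)) / a)) θ := by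
    intro θ hθ
    exact (Real.hasDerivAt_sqrt (ne_of_gt hθ)).comp θ (hg' θ)
  -- values and first derivatives
  have hval : Real.sqrt (g (arctan 2)) = 1 / Real.sqrt (5 * a) := by
    rw [hsqrtg, Real.sqrt_mul (by norm_num : (0:ℝ) ≤ 5)]
  refine ⟨?_, hval, ?_, ?_⟩
  · show 1 / (2 * sa) * sin (arctan 2) = Real.sqrt (g (arctan 2))
    rw [hsqrtg, hsin]; field_simp
  · have hrf1 : deriv (fun θ => 1 / (2 * sa) * sin θ) (arctan 2)
        = 1 / (2 * sa) * cos (arctan 2) :=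
      ((Real.hasDerivAt_sin (arctan 2)).const_mul (1 / (2 * sa))).deriv
    have hφ1 : deriv (fun θ => Real.sqrt (g θ)) (arctan 2)
        = 1 / (2 * Real.sqrt (g (arctan 2))) *
          ((-sin (arctan 2) * (sin (arctan 2) - cos (arctan 2)) +
            cos (arctan 2) * (cos (arctan 2) - -sin (arctan 2))) / a) :=
      (hφ' _ hgpos).deriv
    rw [hrf1, hφ1, hsqrtg, hsin, hcos]
    field_simp
    nlinarith [hs5sq, hsasq, hs5, hsa]
  · -- second derivatives
    -- second derivative of rf
    have hrfd : deriv (fun θ => 1 / (2 * sa) * sin θ) = fun θ => 1 / (2 * sa) * cos θ :=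
      funext fun θ => ((Real.hasDerivAt_sin θ).const_mul (1 / (2 * sa))).deriv
    have hrf2 : deriv (deriv (fun θ => 1 / (2 * sa) * sin θ)) (arctan 2)
        = 1 / (2 * sa) * (-sin (arctan 2)) := by
      rw [hrfd]
      exact ((Real.hasDerivAt_cos (arctan 2)).const_mul (1 / (2 * sa))).deriv
    -- eventually, deriv φ₀ equals an explicit function h
    set D : ℝ → ℝ := fun θ =>
      (-sin θ * (sin θ - cos θ) + cos θ * (cos θ - -sin θ)) / a with hDdef
    set h : ℝ → ℝ := fun θ => D θ / (2 * Real.sqrt (g θ)) with hhdef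
    have hcontg : ContinuousAt g (arctan 2) := by fun_prop
    have hev : ∀ᶠ θ in 𝓝 (arctan 2), 0 < g θ :=
      hcontg.eventually (eventually_gt_nhds hgpos)
    have hevd : deriv (fun θ => Real.sqrt (g θ)) =ᶠ[𝓝 (arctan 2)] h := by
      filter_upwards [hev] with θ hθ
      rw [(hφ' θ hθ).deriv, hhdef, hDdef]
      ring
    have hd2 : deriv (deriv (fun θ => Real.sqrt (g θ))) (arctan 2) = deriv h (arctan 2) :=
      hevd.deriv_eq
    -- derivative of D at arctan 2
    have hD' : HasDerivAt D
        ((-4 * sin (arctan 2) * cos (arctan 2) + 2 * cos (arctan 2) ^ 2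
          - 2 * sin (arctan 2) ^ 2) / a) (arctan 2) := by
      have h1 := ((((Real.hasDerivAt_sin (arctan 2)).neg.mul
          ((Real.hasDerivAt_sin (arctan 2)).sub (Real.hasDerivAt_cos (arctan 2)))).add
        ((Real.hasDerivAt_cos (arctan 2)).mul
          ((Real.hasDerivAt_cos (arctan 2)).sub (Real.hasDerivAt_sin (arctan 2)).neg))).div_const a)
      exact h1.congr_deriv (by simp only [Pi.neg_apply, Pi.sub_apply]; ring)
    -- derivative of denominator
    have hden : HasDerivAt (fun θ => 2 * Real.sqrt (g θ))
        (2 * (1 / (2 * Real.sqrt (g (arctan 2))) * D (arctan 2))) (arctan 2) :=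
      (hφ' _ hgpos).const_mul 2
    have hdenne : 2 * Real.sqrt (g (arctan 2)) ≠ 0 := by
      rw [hsqrtg]; positivity
    have hh' : HasDerivAt h
        ((((-4 * sin (arctan 2) * cos (arctan 2) + 2 * cos (arctan 2) ^ 2
          - 2 * sin (arctan 2) ^ 2) / a) * (2 * Real.sqrt (g (arctan 2)))
          - D (arctan 2) * (2 * (1 / (2 * Real.sqrt (g (arctan 2))) * D (arctan 2))))
          / (2 * Real.sqrt (g (arctan 2))) ^ 2) (arctan 2) :=
      hD'.div hden hdenne
    rw [hrf2, hd2, hh'.deriv]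
    rw [hsqrtg, hDdef]
    simp only [hsin, hcos]
    clear hh' hden hD' hd2 hevd hev hcontg hφ' hg' hrf2 hrfd hval hgval hsqrtg hgpos hginv hdenne hcos hsin
    clear_value s5 sa
    clear hs5def hsadef
    intro hcontra
    field_simp at hcontra
    rw [← hsasq] at hcontra
    ring_nf at hcontra
    have hpos : 0 < s5 ^ 15 * sa ^ 7 := by positivity
    have hpos4 : 0 < sa ^ 4 := by positivity
    linarith
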